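/- Let Q be a directed graph and let W be any collection of subgraphs of Q, directed by inclusion, whose vertex sets cover V(Q) and whose edge sets cover E(Q). Then GC*_m(Q) is the inductive limit of the C*-algebras GC*_m(F) for F ∈ W. -/
import Mathlib


noncomputable section

open scoped Classical

/-! ## Operator algebras, concretely represented -/

/-- A (concrete) operator algebra: a norm-closed subalgebra of the bounded
operators on a complex Hilbert space. -/
structure OpAlg where
  H : Type
  [nacg : NormedAddCommGroup H]
  [ips : InnerProductSpace ℂ H]
  [cs : CompleteSpace H]
  carrier : NonUnitalSubalgebra ℂ (H →L[ℂ] H)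
  isClosed : IsClosed (carrier : Set (H →L[ℂ] H))

attribute [instance] OpAlg.nacg OpAlg.ips OpAlg.cs

/-- The amplification of an `n × n` matrix of operators on `H` to an operator on
`H ⊕₂ ⋯ ⊕₂ H` (`n` summands, with the Hilbert space norm). -/
def matAmp {H : Type} [NormedAddCommGroup H] [InnerProductSpace ℂ H]
    {n : ℕ} (a : Matrix (Fin n) (Fin n) (H →L[ℂ] H)) :
    (PiLp 2 fun _ : Fin n => H) →L[ℂ] (PiLp 2 fun _ : Fin n => H) :=
  ((PiLp.continuousLinearEquiv 2 ℂ fun _ : Fin n => H).symm.toContinuousLinearMap.comp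
    (ContinuousLinearMap.pi fun i => ∑ j, (a i j).comp (ContinuousLinearMap.proj j))).comp
    (PiLp.continuousLinearEquiv 2 ℂ fun _ : Fin n => H).toContinuousLinearMap

/-- The matrix norm of a matrix over a concrete operator algebra. -/
def matNorm (A : OpAlg) {n : ℕ} (a : Matrix (Fin n) (Fin n) A.carrier) : ℝ :=
  ‖matAmp fun i j => (a i j : A.H →L[ℂ] A.H)‖

/-- A completely contractive homomorphism of operator algebras. -/
structure CCHom (A B : OpAlg) where
  toHom : A.carrier →ₙₐ[ℂ] B.carrier
  completelyContractive : ∀ (n : ℕ) (a : Matrix (Fin n) (Fin n) A.carrier),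
    matNorm B (fun i j => toHom (a i j)) ≤ matNorm A a

/-- A completely isometric homomorphism. -/
def CCHom.CompletelyIsometric {A B : OpAlg} (φ : CCHom A B) : Prop :=
  ∀ (n : ℕ) (a : Matrix (Fin n) (Fin n) A.carrier),
    matNorm B (fun i j => φ.toHom (a i j)) = matNorm A a

/-- Two operator algebras are completely isometrically isomorphic if there is a
bijective completely isometric homomorphism between them. -/
def CIIso (A B : OpAlg) : Prop :=
  ∃ φ : CCHom A B, Function.Bijective φ.toHom ∧ φ.CompletelyIsometric

/-! ## Directed graphs -/

/-- A directed graph: vertices, edges, and source and range maps. -/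
structure DiGraph where
  V : Type
  E : Type
  s : E → V
  r : E → V

/-- A contractive representation of a directed graph in an operator algebra:
vertices go to (self-adjoint) projections, edges go to contractions, compatibly
with the range and source maps. -/
structure GraphRep (Q : DiGraph) (A : OpAlg) where
  v : Q.V → A.carrier
  e : Q.E → A.carrier
  idem : ∀ x, v x * v x = v x
  selfAdjoint : ∀ x, IsSelfAdjoint (v x : A.H →L[ℂ] A.H)
  contractive : ∀ x, ‖(e x : A.H →L[ℂ] A.H)‖ ≤ 1
  range_mul : ∀ x, v (Q.r x) * e x = e x
  mul_source : ∀ x, e x * v (Q.s x) = e x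

/-- The representation generates the operator algebra. -/
def GraphRep.Generates {Q : DiGraph} {A : OpAlg} (ρ : GraphRep Q A) : Prop :=
  closure ((NonUnitalAlgebra.adjoin ℂ (Set.range ρ.v ∪ Set.range ρ.e) :
    NonUnitalSubalgebra ℂ A.carrier) : Set A.carrier) = Set.univ

/-- A homomorphism extends (intertwines) two representations of the same graph. -/
def ExtendsRep {Q : DiGraph} {A B : OpAlg} (ψ : CCHom A B)
    (ρ : GraphRep Q A) (σ : GraphRep Q B) : Prop :=
  (∀ x, ψ.toHom (ρ.v x) = σ.v x) ∧ (∀ x, ψ.toHom (ρ.e x) = σ.e x)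

/-- `(A, ι)` is *the* universal operator algebra of the directed graph `Q`:
`ι` generates, and every contractive representation of `Q` factors uniquely
through a completely contractive homomorphism. -/
def IsUniversalOA (Q : DiGraph) (A : OpAlg) (ι : GraphRep Q A) : Prop :=
  ι.Generates ∧
    ∀ (B : OpAlg) (σ : GraphRep Q B), ∃! ψ : CCHom A B, ExtendsRep ψ ι σ


/-! ## C*-algebra framework -/

/-- A concrete C*-algebra: a norm-closed star-subalgebra of the bounded operators on
a complex Hilbert space. -/
structure ConcCStar where
  H : Type
  [nacg : NormedAddCommGroup H]
  [ips : InnerProductSpace ℂ H]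
  [cs : CompleteSpace H]
  carrier : NonUnitalStarSubalgebra ℂ (H →L[ℂ] H)
  isClosed : IsClosed (carrier : Set (H →L[ℂ] H))

attribute [instance] ConcCStar.nacg ConcCStar.ips ConcCStar.cs

/-- The underlying operator algebra of a concrete C*-algebra. -/
def ConcCStar.toOpAlg (C : ConcCStar) : OpAlg :=
  ⟨C.H, C.carrier.toNonUnitalSubalgebra, C.isClosed⟩

/-- A `*`-homomorphism between concrete C*-algebras. -/
abbrev StarHom (C D : ConcCStar) := C.carrier →⋆ₙₐ[ℂ] D.carrier

/-- The doubled graph `Q *_{V(Q)} Q^←`: the free product of `Q` and its adjoint graph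
amalgamated over the common vertex set. -/
def DiGraph.doubled (Q : DiGraph) : DiGraph :=
  ⟨Q.V, Q.E ⊕ Q.E, Sum.elim Q.s Q.r, Sum.elim Q.r Q.s⟩

/-- A contractive `*`-representation of `Q` in a C*-algebra: a contractive
representation of `Q *_{V(Q)} Q^←` such that the two copies of each edge are mapped
to mutually adjoint elements. -/
structure StarRep (Q : DiGraph) (C : ConcCStar) where
  toRep : GraphRep Q.doubled C.toOpAlg
  star_eq : ∀ x : Q.E,
    star ((toRep.e (Sum.inl x)).val) = (toRep.e (Sum.inr x)).val

/-- A `*`-homomorphism extends (intertwines) two `*`-representations of the same graph. -/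
def StarExtendsRep {Q : DiGraph} {C D : ConcCStar} (ψ : StarHom C D)
    (ρ : StarRep Q C) (σ : StarRep Q D) : Prop :=
  (∀ x, (ψ ⟨(ρ.toRep.v x).val, (ρ.toRep.v x).property⟩).val = (σ.toRep.v x).val) ∧
  (∀ x, (ψ ⟨(ρ.toRep.e x).val, (ρ.toRep.e x).property⟩).val = (σ.toRep.e x).val)

/-- `(C, ι)` is *the* universal C*-algebra `GC*ₘ(Q)` of the directed graph `Q`:
`ι` generates `C` as a C*-algebra, and every contractive `*`-representation of `Q`
factors uniquely through a `*`-homomorphism. -/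
def IsUniversalGCm (Q : DiGraph) (C : ConcCStar) (ι : StarRep Q C) : Prop :=
  closure ((NonUnitalStarAlgebra.adjoin ℂ
      (Set.range ι.toRep.v ∪ Set.range ι.toRep.e) :
    NonUnitalStarSubalgebra ℂ C.carrier) : Set C.carrier) = Set.univ ∧
  ∀ (D : ConcCStar) (σ : StarRep Q D), ∃! ψ : StarHom C D, StarExtendsRep ψ ι σ

/-- Reinterpret an element of the underlying operator algebra of a concrete C*-algebra. -/
def ConcCStar.el {C : ConcCStar} (x : C.toOpAlg.carrier) : C.carrier :=
  ⟨x.val, x.property⟩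

/-- `(C, ρ)` is the maximal C*-algebra `C*ₘ(A)` of the operator algebra `A`: `ρ` is a
completely isometric homomorphism onto a C*-generating copy of `A`, and every completely
contractive homomorphism of `A` into a C*-algebra factors uniquely through a
`*`-homomorphism of `C`. -/
def IsMaxCStar (A : OpAlg) (C : ConcCStar) (ρ : CCHom A C.toOpAlg) : Prop :=
  ρ.CompletelyIsometric ∧
  closure ((NonUnitalStarAlgebra.adjoin ℂ
      (Set.range fun a => ConcCStar.el (ρ.toHom a)) :
    NonUnitalStarSubalgebra ℂ C.carrier) : Set C.carrier) = Set.univ ∧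
  ∀ (D : ConcCStar) (φ : CCHom A D.toOpAlg),
    ∃! ψ : StarHom C D, ∀ a, (ψ (ConcCStar.el (ρ.toHom a))).val = (φ.toHom a).val

/-! ## Statement 14 specific definitions -/

/-- A homomorphism of directed graphs. -/
structure GraphHom (Q R : DiGraph) where
  vMap : Q.V → R.V
  eMap : Q.E → R.E
  s_eq : ∀ e, R.s (eMap e) = vMap (Q.s e)
  r_eq : ∀ e, R.r (eMap e) = vMap (Q.r e)

/-- A subgraph of a directed graph. -/
structure Subgraph (Q : DiGraph) where
  VS : Set Q.V
  ES : Set Q.E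
  src_mem : ∀ e ∈ ES, Q.s e ∈ VS
  rng_mem : ∀ e ∈ ES, Q.r e ∈ VS

/-- The directed graph underlying a subgraph. -/
def Subgraph.toGraph {Q : DiGraph} (F : Subgraph Q) : DiGraph :=
  ⟨F.VS, F.ES, fun e => ⟨Q.s e.1, F.src_mem e.1 e.2⟩, fun e => ⟨Q.r e.1, F.rng_mem e.1 e.2⟩⟩

instance (Q : DiGraph) : Preorder (Subgraph Q) where
  le F G := F.VS ⊆ G.VS ∧ F.ES ⊆ G.ES
  le_refl F := ⟨subset_rfl, subset_rfl⟩
  le_trans F G K h h' := ⟨h.1.trans h'.1, h.2.trans h'.2⟩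

/-- The inclusion of a subgraph into a larger subgraph, as a graph homomorphism. -/
def Subgraph.incl {Q : DiGraph} {F G : Subgraph Q} (h : F ≤ G) :
    GraphHom F.toGraph G.toGraph :=
  ⟨fun v => ⟨v.1, h.1 v.2⟩, fun e => ⟨e.1, h.2 e.2⟩, fun _ => rfl, fun _ => rfl⟩

/-- The inclusion of a subgraph into the whole graph, as a graph homomorphism. -/
def Subgraph.inclTop {Q : DiGraph} (F : Subgraph Q) : GraphHom F.toGraph Q :=
  ⟨Subtype.val, Subtype.val, fun _ => rfl, fun _ => rfl⟩

/-- A `*`-homomorphism between universal graph C*-algebras extends a graph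
homomorphism of the underlying graphs, on the canonical generators. -/
def StarExtendsAlong {Q R : DiGraph} {C D : ConcCStar} (ψ : StarHom C D)
    (ρ : StarRep Q C) (σ : StarRep R D) (k : GraphHom Q R) : Prop :=
  (∀ x, (ψ (ConcCStar.el (ρ.toRep.v x))).val = (σ.toRep.v (k.vMap x)).val) ∧
  (∀ x, (ψ (ConcCStar.el (ρ.toRep.e (Sum.inl x)))).val
      = (σ.toRep.e (Sum.inl (k.eMap x))).val) ∧
  (∀ x, (ψ (ConcCStar.el (ρ.toRep.e (Sum.inr x)))).val
      = (σ.toRep.e (Sum.inr (k.eMap x))).val)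

/-! ### Auxiliary material -/

/-- Doubling a graph homomorphism. -/
def GraphHom.doubled {Q R : DiGraph} (k : GraphHom Q R) : GraphHom Q.doubled R.doubled where
  vMap := k.vMap
  eMap := Sum.map k.eMap k.eMap
  s_eq := by
    rintro (e | e)
    · exact k.s_eq e
    · exact k.r_eq e
  r_eq := by
    rintro (e | e)
    · exact k.r_eq e
    · exact k.s_eq e

/-- Pulling back a representation along a graph homomorphism. -/
def GraphRep.pullback {Q R : DiGraph} {A : OpAlg} (k : GraphHom Q R) (ρ : GraphRep R A) :
    GraphRep Q A where
  v x := ρ.v (k.vMap x)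
  e x := ρ.e (k.eMap x)
  idem x := ρ.idem _
  selfAdjoint x := ρ.selfAdjoint _
  contractive x := ρ.contractive _
  range_mul x := by
    show ρ.v (k.vMap (Q.r x)) * ρ.e (k.eMap x) = ρ.e (k.eMap x)
    rw [← k.r_eq]; exact ρ.range_mul _
  mul_source x := by
    show ρ.e (k.eMap x) * ρ.v (k.vMap (Q.s x)) = ρ.e (k.eMap x)
    rw [← k.s_eq]; exact ρ.mul_source _

/-- Pulling back a `*`-representation along a graph homomorphism. -/
def StarRep.pullback {Q R : DiGraph} {C : ConcCStar} (k : GraphHom Q R) (ρ : StarRep R C) :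
    StarRep Q C where
  toRep := ρ.toRep.pullback k.doubled
  star_eq x := ρ.star_eq (k.eMap x)

noncomputable instance ConcCStar.instNonUnitalCStarAlgebra (C : ConcCStar) :
    NonUnitalCStarAlgebra C.carrier :=
  haveI := C.isClosed
  inferInstance

theorem ConcCStar.starHom_norm_le {C D : ConcCStar} (ψ : StarHom C D) (x : C.carrier) :
    ‖ψ x‖ ≤ ‖x‖ :=
  NonUnitalStarAlgHom.norm_apply_le ψ x

theorem ConcCStar.el_mul {C : ConcCStar} (x y : C.toOpAlg.carrier) :
    ConcCStar.el (x * y) = ConcCStar.el x * ConcCStar.el y := rfl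

set_option maxHeartbeats 2000000 in
/-- If `W` is a collection of subgraphs of `Q`, directed by inclusion,
covering the vertices and the edges of `Q`, then `GC*ₘ(Q)` is the inductive limit of the
universal C*-algebras of the members of `W`, with connecting `*`-homomorphisms induced
by the inclusions of subgraphs. -/
theorem universal_graph_CStar_inductive_limit_of_subgraphs
    (Q : DiGraph) (W : Set (Subgraph Q))
    (hdir : DirectedOn (· ≤ ·) W)
    (hV : ⋃ F ∈ W, F.VS = Set.univ) (hE : ⋃ F ∈ W, F.ES = Set.univ)
    (CQ : ConcCStar) (κQ : StarRep Q CQ) (hQ : IsUniversalGCm Q CQ κQ)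
    (C : ∀ F : W, ConcCStar) (κ : ∀ F : W, StarRep F.1.toGraph (C F))
    (hC : ∀ F : W, IsUniversalGCm F.1.toGraph (C F) (κ F))
    (Γ : ∀ F G : W, F.1 ≤ G.1 → StarHom (C F) (C G))
    (hΓ : ∀ (F G : W) (h : F.1 ≤ G.1),
      StarExtendsAlong (Γ F G h) (κ F) (κ G) (Subgraph.incl h))
    (Θ : ∀ F : W, StarHom (C F) CQ)
    (hΘ : ∀ F : W, StarExtendsAlong (Θ F) (κ F) κQ F.1.inclTop) :
    (∀ (F G : W) (h : F.1 ≤ G.1) (x : (C F).carrier),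
      Θ G (Γ F G h x) = Θ F x) ∧
    ∀ (B : ConcCStar) (Γ' : ∀ F : W, StarHom (C F) B),
      (∀ (F G : W) (h : F.1 ≤ G.1) (x : (C F).carrier),
        Γ' G (Γ F G h x) = Γ' F x) →
      ∃! Λ : StarHom CQ B, ∀ (F : W) (x : (C F).carrier),
        Λ (Θ F x) = Γ' F x := by
  classical
  -- Upgrade the extension hypotheses to equalities of subalgebra elements.
  have keyV : ∀ (F G : W) (h : F.1 ≤ G.1) (x : F.1.VS),
      Γ F G h (ConcCStar.el ((κ F).toRep.v x))
        = ConcCStar.el ((κ G).toRep.v ⟨x.1, h.1 x.2⟩) :=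
    fun F G h x => Subtype.ext ((hΓ F G h).1 x)
  have keyEl : ∀ (F G : W) (h : F.1 ≤ G.1) (x : F.1.ES),
      Γ F G h (ConcCStar.el ((κ F).toRep.e (Sum.inl x)))
        = ConcCStar.el ((κ G).toRep.e (Sum.inl ⟨x.1, h.2 x.2⟩)) :=
    fun F G h x => Subtype.ext ((hΓ F G h).2.1 x)
  have keyEr : ∀ (F G : W) (h : F.1 ≤ G.1) (x : F.1.ES),
      Γ F G h (ConcCStar.el ((κ F).toRep.e (Sum.inr x)))
        = ConcCStar.el ((κ G).toRep.e (Sum.inr ⟨x.1, h.2 x.2⟩)) :=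
    fun F G h x => Subtype.ext ((hΓ F G h).2.2 x)
  have keyTV : ∀ (F : W) (x : F.1.VS),
      Θ F (ConcCStar.el ((κ F).toRep.v x)) = ConcCStar.el (κQ.toRep.v x.1) :=
    fun F x => Subtype.ext ((hΘ F).1 x)
  have keyTEl : ∀ (F : W) (x : F.1.ES),
      Θ F (ConcCStar.el ((κ F).toRep.e (Sum.inl x)))
        = ConcCStar.el (κQ.toRep.e (Sum.inl x.1)) :=
    fun F x => Subtype.ext ((hΘ F).2.1 x)
  have keyTEr : ∀ (F : W) (x : F.1.ES),
      Θ F (ConcCStar.el ((κ F).toRep.e (Sum.inr x)))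
        = ConcCStar.el (κQ.toRep.e (Sum.inr x.1)) :=
    fun F x => Subtype.ext ((hΘ F).2.2 x)
  constructor
  · -- compatibility of the maps into `GC*ₘ(Q)`
    intro F G h x
    have h1 : StarExtendsRep (Θ F) (κ F) (StarRep.pullback F.1.inclTop κQ) := by
      refine ⟨(hΘ F).1, ?_⟩
      rintro (e | e)
      · exact (hΘ F).2.1 e
      · exact (hΘ F).2.2 e
    have h2 : StarExtendsRep ((Θ G).comp (Γ F G h)) (κ F)
        (StarRep.pullback F.1.inclTop κQ) := by
      constructor
      · intro y
        show (Θ G (Γ F G h (ConcCStar.el ((κ F).toRep.v y)))).val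
          = ((StarRep.pullback F.1.inclTop κQ).toRep.v y).val
        rw [keyV F G h y]
        exact (hΘ G).1 ⟨y.1, h.1 y.2⟩
      · rintro (e | e)
        · show (Θ G (Γ F G h (ConcCStar.el ((κ F).toRep.e (Sum.inl e))))).val
            = ((StarRep.pullback F.1.inclTop κQ).toRep.e (Sum.inl e)).val
          rw [keyEl F G h e]
          exact (hΘ G).2.1 ⟨e.1, h.2 e.2⟩
        · show (Θ G (Γ F G h (ConcCStar.el ((κ F).toRep.e (Sum.inr e))))).val
            = ((StarRep.pullback F.1.inclTop κQ).toRep.e (Sum.inr e)).val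
          rw [keyEr F G h e]
          exact (hΘ G).2.2 ⟨e.1, h.2 e.2⟩
    exact DFunLike.congr_fun
      (((hC F).2 CQ (StarRep.pullback F.1.inclTop κQ)).unique h2 h1) x
  · -- the universal property of the inductive limit
    intro B Γ' hcomp
    have hVmem : ∀ v : Q.V, ∃ F, F ∈ W ∧ v ∈ F.VS := by
      intro v
      have hv : v ∈ ⋃ F ∈ W, F.VS := by rw [hV]; trivial
      simpa using hv
    have hEmem : ∀ e : Q.E, ∃ F, F ∈ W ∧ e ∈ F.ES := by
      intro e
      have he : e ∈ ⋃ F ∈ W, F.ES := by rw [hE]; trivial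
      simpa using he
    choose Fv hFvW hFv using hVmem
    choose Fe hFeW hFe using hEmem
    let FV : Q.V → W := fun v => ⟨Fv v, hFvW v⟩
    let FE : Q.E → W := fun e => ⟨Fe e, hFeW e⟩
    -- coherence of the compatible family on generators
    have bridgeV : ∀ (F G : W) (h : F.1 ≤ G.1) (v : Q.V) (hv : v ∈ F.1.VS),
        Γ' F (ConcCStar.el ((κ F).toRep.v ⟨v, hv⟩))
          = Γ' G (ConcCStar.el ((κ G).toRep.v ⟨v, h.1 hv⟩)) := by
      intro F G h v hv
      rw [← hcomp F G h, keyV F G h ⟨v, hv⟩]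
    have bridgeEl : ∀ (F G : W) (h : F.1 ≤ G.1) (e : Q.E) (he : e ∈ F.1.ES),
        Γ' F (ConcCStar.el ((κ F).toRep.e (Sum.inl ⟨e, he⟩)))
          = Γ' G (ConcCStar.el ((κ G).toRep.e (Sum.inl ⟨e, h.2 he⟩))) := by
      intro F G h e he
      rw [← hcomp F G h, keyEl F G h ⟨e, he⟩]
    have bridgeEr : ∀ (F G : W) (h : F.1 ≤ G.1) (e : Q.E) (he : e ∈ F.1.ES),
        Γ' F (ConcCStar.el ((κ F).toRep.e (Sum.inr ⟨e, he⟩)))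
          = Γ' G (ConcCStar.el ((κ G).toRep.e (Sum.inr ⟨e, h.2 he⟩))) := by
      intro F G h e he
      rw [← hcomp F G h, keyEr F G h ⟨e, he⟩]
    have cohV : ∀ (F F' : W) (v : Q.V) (hv : v ∈ F.1.VS) (hv' : v ∈ F'.1.VS),
        Γ' F (ConcCStar.el ((κ F).toRep.v ⟨v, hv⟩))
          = Γ' F' (ConcCStar.el ((κ F').toRep.v ⟨v, hv'⟩)) := by
      intro F F' v hv hv'
      obtain ⟨K, hKW, h1, h2⟩ := hdir F.1 F.2 F'.1 F'.2
      rw [bridgeV F ⟨K, hKW⟩ h1 v hv, bridgeV F' ⟨K, hKW⟩ h2 v hv']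
    have cohEl : ∀ (F F' : W) (e : Q.E) (he : e ∈ F.1.ES) (he' : e ∈ F'.1.ES),
        Γ' F (ConcCStar.el ((κ F).toRep.e (Sum.inl ⟨e, he⟩)))
          = Γ' F' (ConcCStar.el ((κ F').toRep.e (Sum.inl ⟨e, he'⟩))) := by
      intro F F' e he he'
      obtain ⟨K, hKW, h1, h2⟩ := hdir F.1 F.2 F'.1 F'.2
      rw [bridgeEl F ⟨K, hKW⟩ h1 e he, bridgeEl F' ⟨K, hKW⟩ h2 e he']
    have cohEr : ∀ (F F' : W) (e : Q.E) (he : e ∈ F.1.ES) (he' : e ∈ F'.1.ES),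
        Γ' F (ConcCStar.el ((κ F).toRep.e (Sum.inr ⟨e, he⟩)))
          = Γ' F' (ConcCStar.el ((κ F').toRep.e (Sum.inr ⟨e, he'⟩))) := by
      intro F F' e he he'
      obtain ⟨K, hKW, h1, h2⟩ := hdir F.1 F.2 F'.1 F'.2
      rw [bridgeEr F ⟨K, hKW⟩ h1 e he, bridgeEr F' ⟨K, hKW⟩ h2 e he']
    -- algebraic laws, pushed through the `Γ'`
    have L_idem : ∀ (F : W) (x : F.1.VS),
        Γ' F (ConcCStar.el ((κ F).toRep.v x)) * Γ' F (ConcCStar.el ((κ F).toRep.v x))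
          = Γ' F (ConcCStar.el ((κ F).toRep.v x)) := by
      intro F x
      rw [← map_mul, ← ConcCStar.el_mul, (κ F).toRep.idem x]
    have L_sa : ∀ (F : W) (x : F.1.VS),
        star ((Γ' F (ConcCStar.el ((κ F).toRep.v x))).val)
          = (Γ' F (ConcCStar.el ((κ F).toRep.v x))).val := by
      intro F x
      have h1 : star (ConcCStar.el ((κ F).toRep.v x)) = ConcCStar.el ((κ F).toRep.v x) :=
        Subtype.ext ((κ F).toRep.selfAdjoint x)
      calc star ((Γ' F (ConcCStar.el ((κ F).toRep.v x))).val)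
          = (star (Γ' F (ConcCStar.el ((κ F).toRep.v x)))).val := rfl
        _ = (Γ' F (star (ConcCStar.el ((κ F).toRep.v x)))).val := by rw [map_star]
        _ = (Γ' F (ConcCStar.el ((κ F).toRep.v x))).val := by rw [h1]
    have L_con : ∀ (F : W) (x : F.1.toGraph.doubled.E),
        ‖(Γ' F (ConcCStar.el ((κ F).toRep.e x))).val‖ ≤ 1 := by
      intro F x
      have h1 : ‖Γ' F (ConcCStar.el ((κ F).toRep.e x))‖
          ≤ ‖ConcCStar.el ((κ F).toRep.e x)‖ := ConcCStar.starHom_norm_le _ _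
      have h2 : ‖ConcCStar.el ((κ F).toRep.e x)‖ = ‖((κ F).toRep.e x).val‖ := rfl
      exact le_trans h1 (le_trans (le_of_eq h2) ((κ F).toRep.contractive x))
    have L_rm : ∀ (F : W) (x : F.1.toGraph.doubled.E),
        Γ' F (ConcCStar.el ((κ F).toRep.v (F.1.toGraph.doubled.r x)))
            * Γ' F (ConcCStar.el ((κ F).toRep.e x))
          = Γ' F (ConcCStar.el ((κ F).toRep.e x)) := by
      intro F x
      rw [← map_mul, ← ConcCStar.el_mul, (κ F).toRep.range_mul x]
    have L_ms : ∀ (F : W) (x : F.1.toGraph.doubled.E),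
        Γ' F (ConcCStar.el ((κ F).toRep.e x))
            * Γ' F (ConcCStar.el ((κ F).toRep.v (F.1.toGraph.doubled.s x)))
          = Γ' F (ConcCStar.el ((κ F).toRep.e x)) := by
      intro F x
      rw [← map_mul, ← ConcCStar.el_mul, (κ F).toRep.mul_source x]
    have L_star : ∀ (F : W) (x : F.1.ES),
        star ((Γ' F (ConcCStar.el ((κ F).toRep.e (Sum.inl x)))).val)
          = (Γ' F (ConcCStar.el ((κ F).toRep.e (Sum.inr x)))).val := by
      intro F x
      have h1 : star (ConcCStar.el ((κ F).toRep.e (Sum.inl x)))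
          = ConcCStar.el ((κ F).toRep.e (Sum.inr x)) :=
        Subtype.ext ((κ F).star_eq x)
      calc star ((Γ' F (ConcCStar.el ((κ F).toRep.e (Sum.inl x)))).val)
          = (star (Γ' F (ConcCStar.el ((κ F).toRep.e (Sum.inl x))))).val := rfl
        _ = (Γ' F (star (ConcCStar.el ((κ F).toRep.e (Sum.inl x))))).val := by rw [map_star]
        _ = (Γ' F (ConcCStar.el ((κ F).toRep.e (Sum.inr x)))).val := by rw [h1]
    -- the glued representation of `Q` in `B`
    let gv : Q.V → B.carrier := fun v =>
      Γ' (FV v) (ConcCStar.el ((κ (FV v)).toRep.v ⟨v, hFv v⟩))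
    let gel : Q.E → B.carrier := fun e =>
      Γ' (FE e) (ConcCStar.el ((κ (FE e)).toRep.e (Sum.inl ⟨e, hFe e⟩)))
    let ger : Q.E → B.carrier := fun e =>
      Γ' (FE e) (ConcCStar.el ((κ (FE e)).toRep.e (Sum.inr ⟨e, hFe e⟩)))
    let σ : StarRep Q B :=
      { toRep :=
        { v := fun v => ⟨(gv v).val, (gv v).property⟩
          e := fun x => Sum.elim (fun e => (⟨(gel e).val, (gel e).property⟩ :
              B.toOpAlg.carrier)) (fun e => ⟨(ger e).val, (ger e).property⟩) x
          idem := fun v =>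
            Subtype.ext (congrArg Subtype.val (L_idem (FV v) ⟨v, hFv v⟩))
          selfAdjoint := fun v => L_sa (FV v) ⟨v, hFv v⟩
          contractive := by
            rintro (e | e)
            · exact L_con (FE e) (Sum.inl ⟨e, hFe e⟩)
            · exact L_con (FE e) (Sum.inr ⟨e, hFe e⟩)
          range_mul := by
            rintro (e | e)
            · have key : gv (Q.r e)
                  = Γ' (FE e) (ConcCStar.el ((κ (FE e)).toRep.v
                      ⟨Q.r e, (Fe e).rng_mem e (hFe e)⟩)) :=
                cohV (FV (Q.r e)) (FE e) (Q.r e) (hFv (Q.r e)) ((Fe e).rng_mem e (hFe e))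
              have : gv (Q.r e) * gel e = gel e := by
                rw [key]; exact L_rm (FE e) (Sum.inl ⟨e, hFe e⟩)
              exact Subtype.ext (congrArg Subtype.val this)
            · have key : gv (Q.s e)
                  = Γ' (FE e) (ConcCStar.el ((κ (FE e)).toRep.v
                      ⟨Q.s e, (Fe e).src_mem e (hFe e)⟩)) :=
                cohV (FV (Q.s e)) (FE e) (Q.s e) (hFv (Q.s e)) ((Fe e).src_mem e (hFe e))
              have : gv (Q.s e) * ger e = ger e := by
                rw [key]; exact L_rm (FE e) (Sum.inr ⟨e, hFe e⟩)
              exact Subtype.ext (congrArg Subtype.val this)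
          mul_source := by
            rintro (e | e)
            · have key : gv (Q.s e)
                  = Γ' (FE e) (ConcCStar.el ((κ (FE e)).toRep.v
                      ⟨Q.s e, (Fe e).src_mem e (hFe e)⟩)) :=
                cohV (FV (Q.s e)) (FE e) (Q.s e) (hFv (Q.s e)) ((Fe e).src_mem e (hFe e))
              have : gel e * gv (Q.s e) = gel e := by
                rw [key]; exact L_ms (FE e) (Sum.inl ⟨e, hFe e⟩)
              exact Subtype.ext (congrArg Subtype.val this)
            · have key : gv (Q.r e)
                  = Γ' (FE e) (ConcCStar.el ((κ (FE e)).toRep.v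
                      ⟨Q.r e, (Fe e).rng_mem e (hFe e)⟩)) :=
                cohV (FV (Q.r e)) (FE e) (Q.r e) (hFv (Q.r e)) ((Fe e).rng_mem e (hFe e))
              have : ger e * gv (Q.r e) = ger e := by
                rw [key]; exact L_ms (FE e) (Sum.inr ⟨e, hFe e⟩)
              exact Subtype.ext (congrArg Subtype.val this) }
        star_eq := fun x => L_star (FE x) ⟨x, hFe x⟩ }
    obtain ⟨Λ, hΛ, hΛu⟩ := hQ.2 B σ
    have main : ∀ F : W, Λ.comp (Θ F) = Γ' F := by
      intro F
      refine ((hC F).2 B (StarRep.pullback F.1.inclTop σ)).unique ?_ ?_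
      · constructor
        · intro x
          show (Λ (Θ F (ConcCStar.el ((κ F).toRep.v x)))).val
            = ((StarRep.pullback F.1.inclTop σ).toRep.v x).val
          rw [keyTV F x]
          exact hΛ.1 x.1
        · rintro (e | e)
          · show (Λ (Θ F (ConcCStar.el ((κ F).toRep.e (Sum.inl e))))).val
              = ((StarRep.pullback F.1.inclTop σ).toRep.e (Sum.inl e)).val
            rw [keyTEl F e]
            exact hΛ.2 (Sum.inl e.1)
          · show (Λ (Θ F (ConcCStar.el ((κ F).toRep.e (Sum.inr e))))).val
              = ((StarRep.pullback F.1.inclTop σ).toRep.e (Sum.inr e)).val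
            rw [keyTEr F e]
            exact hΛ.2 (Sum.inr e.1)
      · constructor
        · intro x
          exact congrArg Subtype.val (cohV F (FV x.1) x.1 x.2 (hFv x.1))
        · rintro (e | e)
          · exact congrArg Subtype.val (cohEl F (FE e.1) e.1 e.2 (hFe e.1))
          · exact congrArg Subtype.val (cohEr F (FE e.1) e.1 e.2 (hFe e.1))
    refine ⟨Λ, fun F x => DFunLike.congr_fun (main F) x, ?_⟩
    intro Λ' hΛ'
    apply hΛu
    constructor
    · intro v
      show (Λ' (ConcCStar.el (κQ.toRep.v v))).val = (σ.toRep.v v).val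
      rw [← keyTV (FV v) ⟨v, hFv v⟩, hΛ' (FV v)]
    · rintro (e | e)
      · show (Λ' (ConcCStar.el (κQ.toRep.e (Sum.inl e)))).val
          = (σ.toRep.e (Sum.inl e)).val
        rw [← keyTEl (FE e) ⟨e, hFe e⟩, hΛ' (FE e)]
        rfl
      · show (Λ' (ConcCStar.el (κQ.toRep.e (Sum.inr e)))).val
          = (σ.toRep.e (Sum.inr e)).val
        rw [← keyTEr (FE e) ⟨e, hFe e⟩, hΛ' (FE e)]
        rfl

end
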